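/- Let G be a digraph on a finite vertex set V with a weight function w : V → ℝ, and suppose G admits at least one doubly infinite walk. Then the supremum, over all doubly infinite walks W in G, of the upper average weight of W equals the maximum, over all simple cycles C of G, of the average weight of C; and likewise the infimum, over all doubly infinite walks W, of the lower average weight of W equals the minimum, over all simple cycles C, of the average weight of C. -/

import Mathlib

open Filter

/-- The set of average weights of simple cycles in the digraph `adj` on `V`,
where a simple cycle of length `ℓ ≥ 1` is encoded as an `ℓ`-periodic doubly
infinite walk `c : ℤ → V` that is injective on `[0, ℓ)`. -/
def cycleAvgSet {V : Type*} (adj : V → V → Prop) (w : V → ℝ) : Set ℝ :=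
  {x : ℝ | ∃ (ℓ : ℕ) (c : ℤ → V), 0 < ℓ ∧
    (∀ i : ℤ, adj (c i) (c (i + 1))) ∧
    (∀ i : ℤ, c (i + (ℓ : ℤ)) = c i) ∧
    Set.InjOn c (Set.Ico (0 : ℤ) (ℓ : ℤ)) ∧
    x = (∑ i ∈ Finset.Ico (0 : ℤ) (ℓ : ℤ), w (c i)) / (ℓ : ℝ)}

open Finset

lemma Ico_shift (f : ℤ → ℝ) (a b t : ℤ) :
    ∑ k ∈ Finset.Ico (a+t) (b+t), f k = ∑ k ∈ Finset.Ico a b, f (k+t) := by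
  rw [← Finset.map_add_right_Ico, Finset.sum_map]; rfl

lemma cycle_mem {V : Type*} (adj : V → V → Prop) (w : V → ℝ)
    (v : ℤ → V) (hv : ∀ i, adj (v i) (v (i+1)))
    (a : ℤ) (ℓ : ℕ) (hℓ : 0 < ℓ) (hper : v (a + (ℓ:ℤ)) = v a)
    (hinj : Set.InjOn v (Set.Ico a (a + (ℓ:ℤ)))) :
    (∑ k ∈ Finset.Ico a (a + (ℓ:ℤ)), w (v k)) / (ℓ:ℝ) ∈ cycleAvgSet adj w := by
  have hℓz : (0:ℤ) < (ℓ:ℤ) := by exact_mod_cast hℓ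
  have hmod : ∀ k : ℤ, 0 ≤ k → k < (ℓ:ℤ) → k % (ℓ:ℤ) = k := fun k h1 h2 => Int.emod_eq_of_lt h1 h2
  refine ⟨ℓ, fun k => v (a + k % (ℓ:ℤ)), hℓ, ?_, ?_, ?_, ?_⟩
  · intro k
    show adj (v (a + k % (ℓ:ℤ))) (v (a + (k+1) % (ℓ:ℤ)))
    set r := k % (ℓ:ℤ) with hr
    have hr0 : 0 ≤ r := Int.emod_nonneg k hℓz.ne'
    have hrl : r < (ℓ:ℤ) := Int.emod_lt_of_pos k hℓz
    have hk1 : (k+1) % (ℓ:ℤ) = (r+1) % (ℓ:ℤ) := by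
      conv_lhs => rw [show k + 1 = (r + 1) + (ℓ:ℤ) * (k / (ℓ:ℤ)) by
        rw [hr]; have := Int.emod_add_mul_ediv k (ℓ:ℤ); linarith]
      rw [Int.add_mul_emod_self_left]
    rcases lt_or_eq_of_le (by omega : r + 1 ≤ (ℓ:ℤ)) with h | h
    · rw [hk1, hmod _ (by omega) h, ← add_assoc]
      exact hv (a + r)
    · rw [hk1, h, Int.emod_self, add_zero, ← hper, show a + (ℓ:ℤ) = (a + r) + 1 by omega]
      exact hv (a + r)
  · intro k
    simp only [Int.add_mul_emod_self_left]
    rw [show k + (ℓ:ℤ) = k + (ℓ:ℤ)*1 by ring, Int.add_mul_emod_self_left]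
  · intro p hp q hq heq
    simp only [Set.mem_Ico] at hp hq
    simp only at heq
    rw [hmod p hp.1 hp.2, hmod q hq.1 hq.2] at heq
    have := hinj (by simp [Set.mem_Ico]; omega) (by simp [Set.mem_Ico]; omega) heq
    omega
  · congr 1
    rw [show (Finset.Ico a (a + (ℓ:ℤ))) = Finset.Ico (0+a) ((ℓ:ℤ)+a) by rw [zero_add, add_comm a],
      Ico_shift]
    refine Finset.sum_congr rfl fun k hk => ?_
    simp only [Finset.mem_Ico] at hk
    simp only
    rw [hmod k hk.1 hk.2, add_comm a k]

lemma exists_rep {V : Type*} [Fintype V] (v : ℤ → V) (a : ℤ) :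
    ∃ i j : ℤ, a ≤ i ∧ i < j ∧ j ≤ a + Fintype.card V ∧ v i = v j := by
  classical
  have hcard : (Finset.univ : Finset V).card < (Finset.Icc a (a + Fintype.card V)).card := by
    rw [Int.card_Icc]
    simp [Finset.card_univ]
    omega
  obtain ⟨x, hx, y, hy, hxy, hvxy⟩ :=
    Finset.exists_ne_map_eq_of_card_lt_of_maps_to hcard (fun x _ => Finset.mem_univ (v x))
  simp only [Finset.mem_Icc] at hx hy
  rcases hxy.lt_or_gt with h | h
  · exact ⟨x, y, hx.1, h, hy.2, hvxy⟩
  · exact ⟨y, x, hy.1, h, hx.2, hvxy.symm⟩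

lemma find_cycle {V : Type*} (v : ℤ → V) (a b i₀ j₀ : ℤ)
    (h1 : a ≤ i₀) (h2 : i₀ < j₀) (h3 : j₀ ≤ b) (h4 : v i₀ = v j₀) :
    ∃ (i : ℤ) (ℓ : ℕ), 0 < ℓ ∧ (ℓ:ℤ) ≤ j₀ - i₀ ∧ a ≤ i ∧ i + (ℓ:ℤ) ≤ b ∧
      v (i + (ℓ:ℤ)) = v i ∧ Set.InjOn v (Set.Ico i (i + (ℓ:ℤ))) := by
  classical
  set P : ℕ → Prop := fun d => 0 < d ∧ ∃ i, a ≤ i ∧ i + (d:ℤ) ≤ b ∧ v (i + (d:ℤ)) = v i with hP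
  have hP0 : P (j₀ - i₀).toNat := by
    refine ⟨by omega, i₀, h1, ?_, ?_⟩
    · rw [Int.toNat_of_nonneg (by omega)]; omega
    · rw [Int.toNat_of_nonneg (by omega)]; rw [show i₀ + (j₀ - i₀) = j₀ by ring]; exact h4.symm
  set ℓ := Nat.find ⟨_, hP0⟩ with hℓdef
  obtain ⟨hℓpos, i, hai, hib, hvi⟩ := Nat.find_spec (⟨_, hP0⟩ : ∃ d, P d)
  refine ⟨i, ℓ, hℓpos, ?_, hai, hib, hvi, ?_⟩
  · have := Nat.find_min' (⟨_, hP0⟩ : ∃ d, P d) hP0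
    omega
  · have key : ∀ p q : ℤ, p ∈ Set.Ico i (i + (ℓ:ℤ)) → q ∈ Set.Ico i (i + (ℓ:ℤ)) →
        p < q → v p ≠ v q := by
      intro p q hp hq hpq hne
      simp only [Set.mem_Ico] at hp hq
      have hd : P (q - p).toNat := by
        refine ⟨by omega, p, by omega, ?_, ?_⟩
        · rw [Int.toNat_of_nonneg (by omega)]; omega
        · rw [Int.toNat_of_nonneg (by omega)]; rw [show p + (q - p) = q by ring]; exact hne.symm
      have := Nat.find_min (⟨_, hP0⟩ : ∃ d, P d) (m := (q - p).toNat) (by omega) hd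
      exact this
    intro p hp q hq heq
    by_contra hne
    rcases lt_or_gt_of_ne hne with h | h
    · exact key p q hp hq h heq
    · exact key q p hq hp h heq.symm

lemma Ico_split (f : ℤ → ℝ) {a b c : ℤ} (h1 : a ≤ b) (h2 : b ≤ c) :
    ∑ k ∈ Finset.Ico a c, f k = (∑ k ∈ Finset.Ico a b, f k) + ∑ k ∈ Finset.Ico b c, f k := by
  rw [← Finset.sum_union (Finset.Ico_disjoint_Ico_consecutive a b c),
    Finset.Ico_union_Ico_eq_Ico h1 h2]

lemma segment_sum_le {V : Type*} [Fintype V] (adj : V → V → Prop) (w : V → ℝ) (M K : ℝ)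
    (hM : ∀ x ∈ cycleAvgSet adj w, x ≤ M)
    (hK : ∀ x, w x - M ≤ K) (hK0 : 0 ≤ K) :
    ∀ (n : ℕ) (v : ℤ → V), (∀ i, adj (v i) (v (i+1))) → ∀ a : ℤ,
      ∑ k ∈ Finset.Ico a (a + (n:ℤ)), (w (v k) - M) ≤ (Fintype.card V : ℝ) * K := by
  intro n
  induction n using Nat.strong_induction_on with
  | _ n IH =>
    intro v hv a
    by_cases hn : n ≤ Fintype.card V
    · calc ∑ k ∈ Finset.Ico a (a + (n:ℤ)), (w (v k) - M)
          ≤ ∑ _k ∈ Finset.Ico a (a + (n:ℤ)), K := Finset.sum_le_sum fun k _ => hK _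
        _ = (n : ℝ) * K := by
            rw [Finset.sum_const, Int.card_Ico]
            simp [nsmul_eq_mul]
        _ ≤ (Fintype.card V : ℝ) * K := by
            apply mul_le_mul_of_nonneg_right _ hK0
            exact_mod_cast hn
    · push_neg at hn
      obtain ⟨i₀, j₀, hai0, hij0, hj0, hv0⟩ := exists_rep v a
      obtain ⟨i, ℓ, hℓpos, hℓle, hai, hib, hvi, hinj⟩ :=
        find_cycle v a (a + (n:ℤ)) i₀ j₀ hai0 hij0 (by push_cast; omega) hv0
      have hℓn : ℓ < n := by omega
      -- the cycle contributes nonpositively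
      have hcyc : ∑ k ∈ Finset.Ico i (i + (ℓ:ℤ)), (w (v k) - M) ≤ 0 := by
        have hmem := cycle_mem adj w v hv i ℓ hℓpos hvi hinj
        have hle := hM _ hmem
        have hcard : (Finset.Ico i (i + (ℓ:ℤ))).card = ℓ := by
          rw [Int.card_Ico]; omega
        rw [Finset.sum_sub_distrib, Finset.sum_const, hcard, nsmul_eq_mul, sub_nonpos]
        have hℓR : (0:ℝ) < (ℓ:ℝ) := by exact_mod_cast hℓpos
        rw [div_le_iff₀ hℓR] at hle
        linarith [hle]
      -- spliced walk
      set v' : ℤ → V := fun k => if k < i then v k else v (k + (ℓ:ℤ)) with hv'def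
      have hv' : ∀ k, adj (v' k) (v' (k+1)) := by
        intro k
        simp only [hv'def]
        rcases lt_trichotomy (k+1) i with h | h | h
        · rw [if_pos (by omega), if_pos h]; exact hv k
        · rw [if_pos (by omega), if_neg (by omega),
            show k + 1 + (ℓ:ℤ) = i + (ℓ:ℤ) by omega, hvi, ← h]
          exact hv k
        · rw [if_neg (by omega), if_neg (by omega), show k + 1 + (ℓ:ℤ) = (k + (ℓ:ℤ)) + 1 by ring]
          exact hv (k + (ℓ:ℤ))
      have hsum : ∑ k ∈ Finset.Ico a (a + (n:ℤ)), (w (v k) - M)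
          = (∑ k ∈ Finset.Ico a (a + ((n - ℓ : ℕ):ℤ)), (w (v' k) - M))
            + ∑ k ∈ Finset.Ico i (i + (ℓ:ℤ)), (w (v k) - M) := by
        have hc1 : ((n - ℓ : ℕ):ℤ) = (n:ℤ) - (ℓ:ℤ) := by omega
        have e1 : ∑ k ∈ Finset.Ico a (a + (n:ℤ)), (w (v k) - M)
            = (∑ k ∈ Finset.Ico a i, (w (v k) - M))
              + ((∑ k ∈ Finset.Ico i (i + (ℓ:ℤ)), (w (v k) - M))
              + ∑ k ∈ Finset.Ico (i + (ℓ:ℤ)) (a + (n:ℤ)), (w (v k) - M)) := by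
          rw [← Ico_split _ (by omega : i ≤ i + (ℓ:ℤ)) (by omega : i + (ℓ:ℤ) ≤ a + (n:ℤ)),
            ← Ico_split _ hai (by omega : i ≤ a + (n:ℤ))]
        have e2 : ∑ k ∈ Finset.Ico a (a + ((n - ℓ : ℕ):ℤ)), (w (v' k) - M)
            = (∑ k ∈ Finset.Ico a i, (w (v k) - M))
              + ∑ k ∈ Finset.Ico (i + (ℓ:ℤ)) (a + (n:ℤ)), (w (v k) - M) := by
          rw [hc1, Ico_split _ (by omega : a ≤ i) (by omega : i ≤ a + ((n:ℤ) - (ℓ:ℤ)))]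
          congr 1
          · refine Finset.sum_congr rfl fun k hk => ?_
            simp only [Finset.mem_Ico] at hk
            rw [hv'def]; simp only [if_pos hk.2]
          · have : ∑ k ∈ Finset.Ico i (a + ((n:ℤ) - (ℓ:ℤ))), (w (v' k) - M)
                = ∑ k ∈ Finset.Ico i (a + ((n:ℤ) - (ℓ:ℤ))), (w (v (k + (ℓ:ℤ))) - M) := by
              refine Finset.sum_congr rfl fun k hk => ?_
              simp only [Finset.mem_Ico] at hk
              rw [hv'def]; simp only [if_neg (by omega : ¬ k < i)]
            rw [this, ← Ico_shift (fun k => w (v k) - M) i (a + ((n:ℤ) - (ℓ:ℤ))) (ℓ:ℤ),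
              show a + ((n:ℤ) - (ℓ:ℤ)) + (ℓ:ℤ) = a + (n:ℤ) by ring]
        rw [e1, e2]; ring
      rw [hsum]
      have := IH (n - ℓ) (by omega) v' hv' a
      linarith

lemma neg_mem_cycleAvgSet {V : Type*} {adj : V → V → Prop} {w : V → ℝ} {x : ℝ}
    (h : x ∈ cycleAvgSet adj w) : -x ∈ cycleAvgSet adj (-w) := by
  obtain ⟨ℓ, c, hℓ, hadj, hper, hinj, hx⟩ := h
  exact ⟨ℓ, c, hℓ, hadj, hper, hinj, by
    simp only [Pi.neg_apply, Finset.sum_neg_distrib, hx, neg_div]⟩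


lemma Ico_single (f : ℤ → ℝ) (a : ℤ) : ∑ k ∈ Finset.Ico a (a+1), f k = f a := by
  have h : Finset.Ico a (a+1) = {a} := by ext k; simp only [Finset.mem_Ico, Finset.mem_singleton]; omega
  rw [h, Finset.sum_singleton]

lemma per_window {V : Type*} (w : V → ℝ) (c : ℤ → V) (ℓ : ℕ)
    (hper : ∀ i : ℤ, c (i + (ℓ:ℤ)) = c i) (t : ℤ) :
    ∑ k ∈ Finset.Ico t (t + (ℓ:ℤ)), w (c k) = ∑ k ∈ Finset.Ico 0 (ℓ:ℤ), w (c k) := by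
  induction t using Int.induction_on with
  | zero => simp
  | succ t ih =>
    rcases Nat.eq_zero_or_pos ℓ with h0 | hpos
    · simp [h0]
    have hℓz : (0:ℤ) < (ℓ:ℤ) := by exact_mod_cast hpos
    rw [← ih]
    have e1 : ∑ k ∈ Finset.Ico (t:ℤ) (t + (ℓ:ℤ) + 1), w (c k)
        = (∑ k ∈ Finset.Ico (t:ℤ) (t + (ℓ:ℤ)), w (c k)) + w (c (t + (ℓ:ℤ))) := by
      rw [Ico_split (fun k => w (c k)) (by omega : (t:ℤ) ≤ t + (ℓ:ℤ)) (by omega)]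
      congr 1
      exact Ico_single (fun k => w (c k)) (t + (ℓ:ℤ))
    have e2 : ∑ k ∈ Finset.Ico (t:ℤ) (t + (ℓ:ℤ) + 1), w (c k)
        = w (c t) + ∑ k ∈ Finset.Ico ((t:ℤ)+1) (t + (ℓ:ℤ) + 1), w (c k) := by
      rw [Ico_split (fun k => w (c k)) (by omega : (t:ℤ) ≤ (t:ℤ)+1) (by omega)]
      congr 1
      exact Ico_single (fun k => w (c k)) (t:ℤ)
    have e3 : ((t:ℤ)+1) + (ℓ:ℤ) = t + (ℓ:ℤ) + 1 := by ring
    rw [e3]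
    rw [hper t] at e1
    linarith [e1, e2]
  | pred t ih =>
    rcases Nat.eq_zero_or_pos ℓ with h0 | hpos
    · simp [h0]
    have hℓz : (0:ℤ) < (ℓ:ℤ) := by exact_mod_cast hpos
    rw [← ih]
    have e1 : ∑ k ∈ Finset.Ico (-(t:ℤ)-1) (-(t:ℤ) + (ℓ:ℤ)), w (c k)
        = w (c (-(t:ℤ)-1)) + ∑ k ∈ Finset.Ico (-(t:ℤ)) (-(t:ℤ) + (ℓ:ℤ)), w (c k) := by
      rw [Ico_split (fun k => w (c k)) (by omega : -(t:ℤ)-1 ≤ -(t:ℤ)) (by omega)]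
      congr 1
      have h := Ico_single (fun k => w (c k)) (-(t:ℤ)-1)
      rw [show -(t:ℤ)-1+1 = -(t:ℤ) by ring] at h
      exact h
    have e2 : ∑ k ∈ Finset.Ico (-(t:ℤ)-1) (-(t:ℤ) + (ℓ:ℤ)), w (c k)
        = (∑ k ∈ Finset.Ico (-(t:ℤ)-1) (-(t:ℤ)-1 + (ℓ:ℤ)), w (c k)) + w (c (-(t:ℤ)-1 + (ℓ:ℤ))) := by
      rw [Ico_split (fun k => w (c k)) (by omega : -(t:ℤ)-1 ≤ -(t:ℤ)-1+(ℓ:ℤ)) (by omega)]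
      congr 1
      have h := Ico_single (fun k => w (c k)) (-(t:ℤ)-1+(ℓ:ℤ))
      rw [show -(t:ℤ)-1+(ℓ:ℤ)+1 = -(t:ℤ)+(ℓ:ℤ) by ring] at h
      exact h
    have hp1 := hper (-(t:ℤ)-1)
    rw [hp1] at e2
    linarith [e1, e2]

lemma per_window_mul {V : Type*} (w : V → ℝ) (c : ℤ → V) (ℓ : ℕ)
    (hper : ∀ i : ℤ, c (i + (ℓ:ℤ)) = c i) (t : ℤ) (q : ℕ) :
    ∑ k ∈ Finset.Ico t (t + (q:ℤ) * (ℓ:ℤ)), w (c k)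
      = (q:ℝ) * ∑ k ∈ Finset.Ico 0 (ℓ:ℤ), w (c k) := by
  induction q with
  | zero => simp
  | succ q ih =>
    have : t + ((q+1:ℕ):ℤ) * (ℓ:ℤ) = (t + (q:ℤ)*(ℓ:ℤ)) + (ℓ:ℤ) := by push_cast; ring
    rw [this, Ico_split (fun k => w (c k)) (le_add_of_nonneg_right (by positivity) : t ≤ t + (q:ℤ)*(ℓ:ℤ)) (by omega),
      ih, per_window w c ℓ hper]
    push_cast
    ring

lemma Icc_neg_eq_Ico (N : ℕ) (f : ℤ → ℝ) :
    ∑ k ∈ Finset.Icc (-(N:ℤ)) (N:ℤ), f k = ∑ k ∈ Finset.Ico (-(N:ℤ)) ((N:ℤ)+1), f k := by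
  have h : Finset.Icc (-(N:ℤ)) (N:ℤ) = Finset.Ico (-(N:ℤ)) ((N:ℤ)+1) := by
    ext k; simp only [Finset.mem_Icc, Finset.mem_Ico]; omega
  rw [h]


lemma periodic_avg_tendsto {V : Type*} (w : V → ℝ) (c : ℤ → V) (ℓ : ℕ) (hℓ : 0 < ℓ)
    (hper : ∀ i : ℤ, c (i + (ℓ:ℤ)) = c i) (B : ℝ) (hB : ∀ x, |w x| ≤ B) :
    Tendsto (fun N : ℕ => (∑ i ∈ Finset.Icc (-(N:ℤ)) (N:ℤ), w (c i)) / (2*(N:ℝ)+1)) atTop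
      (nhds ((∑ i ∈ Finset.Ico 0 (ℓ:ℤ), w (c i)) / (ℓ:ℝ))) := by
  set S := ∑ i ∈ Finset.Ico 0 (ℓ:ℤ), w (c i) with hS
  have hB0 : 0 ≤ B := le_trans (abs_nonneg _) (hB (c 0))
  have hℓR : (0:ℝ) < (ℓ:ℝ) := by exact_mod_cast hℓ
  have key : ∀ N : ℕ, |(∑ i ∈ Finset.Icc (-(N:ℤ)) (N:ℤ), w (c i)) / (2*(N:ℝ)+1) - S/(ℓ:ℝ)|
      ≤ ((ℓ:ℝ)*B + |S|) / (2*(N:ℝ)+1) := by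
    intro N
    set q := (2*N+1) / ℓ with hq
    set r := (2*N+1) % ℓ with hrdef
    have hqr : ℓ * q + r = 2*N+1 := Nat.div_add_mod (2*N+1) ℓ
    have hrℓ : r < ℓ := Nat.mod_lt _ hℓ
    have hTpos : (0:ℝ) < 2*(N:ℝ)+1 := by positivity
    set T : ℝ := 2*(N:ℝ)+1 with hT
    have hzr : ((ℓ:ℝ) * (q:ℝ) + (r:ℝ)) = 2*(N:ℝ)+1 := by exact_mod_cast hqr
    have hzi : ((ℓ:ℤ) * (q:ℤ) + (r:ℤ)) = 2*(N:ℤ)+1 := by exact_mod_cast hqr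
    have hr0 : (0:ℤ) ≤ (r:ℤ) := Int.ofNat_nonneg r
    have hTeq : T = (q:ℝ)*(ℓ:ℝ) + (r:ℝ) := by
      rw [hT]; linarith [hzr]
    -- split the sum
    have hsplit : ∑ i ∈ Finset.Icc (-(N:ℤ)) (N:ℤ), w (c i)
        = (q:ℝ) * S + ∑ i ∈ Finset.Ico (-(N:ℤ) + (q:ℤ)*(ℓ:ℤ)) ((N:ℤ)+1), w (c i) := by
      rw [Icc_neg_eq_Ico N (fun i => w (c i)),
        Ico_split (fun i => w (c i)) (le_add_of_nonneg_right (by positivity) :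
          -(N:ℤ) ≤ -(N:ℤ) + (q:ℤ)*(ℓ:ℤ)) (by rw [mul_comm]; linarith [hzi, hr0]),
        per_window_mul w c ℓ hper]
    set R := ∑ i ∈ Finset.Ico (-(N:ℤ) + (q:ℤ)*(ℓ:ℤ)) ((N:ℤ)+1), w (c i) with hR
    have hRbound : |R| ≤ (ℓ:ℝ) * B := by
      have hcard : (Finset.Ico (-(N:ℤ) + (q:ℤ)*(ℓ:ℤ)) ((N:ℤ)+1)).card = r := by
        have he : (N:ℤ)+1 - (-(N:ℤ) + (q:ℤ)*(ℓ:ℤ)) = (r:ℤ) := by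
          rw [mul_comm]; linarith [hzi]
        rw [Int.card_Ico, he]; omega
      calc |R| ≤ ∑ i ∈ Finset.Ico (-(N:ℤ) + (q:ℤ)*(ℓ:ℤ)) ((N:ℤ)+1), |w (c i)| :=
            Finset.abs_sum_le_sum_abs _ _
        _ ≤ ∑ _i ∈ Finset.Ico (-(N:ℤ) + (q:ℤ)*(ℓ:ℤ)) ((N:ℤ)+1), B :=
            Finset.sum_le_sum fun i _ => hB _
        _ = (r:ℝ) * B := by rw [Finset.sum_const, hcard, nsmul_eq_mul]
        _ ≤ (ℓ:ℝ) * B := by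
            apply mul_le_mul_of_nonneg_right _ hB0
            exact_mod_cast hrℓ.le
    rw [hsplit]
    have hiden : ((q:ℝ) * S + R)/T - S/(ℓ:ℝ) = ((ℓ:ℝ)*R - S*(r:ℝ))/(T*(ℓ:ℝ)) := by
      rw [hTeq]
      have h1 : (q:ℝ)*(ℓ:ℝ) + (r:ℝ) ≠ 0 := by rw [← hTeq]; exact hTpos.ne'
      field_simp
      ring
    rw [hiden, abs_div, abs_of_pos (by positivity : (0:ℝ) < T*(ℓ:ℝ))]
    have hnum : |(ℓ:ℝ)*R - S*(r:ℝ)| ≤ (ℓ:ℝ) * ((ℓ:ℝ)*B + |S|) := by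
      calc |(ℓ:ℝ)*R - S*(r:ℝ)| ≤ |(ℓ:ℝ)*R| + |S*(r:ℝ)| := abs_sub _ _
        _ = (ℓ:ℝ)*|R| + |S| * (r:ℝ) := by
            rw [abs_mul, abs_mul, abs_of_nonneg (by positivity : (0:ℝ) ≤ (ℓ:ℝ)),
              abs_of_nonneg (by positivity : (0:ℝ) ≤ (r:ℝ))]
        _ ≤ (ℓ:ℝ)*((ℓ:ℝ)*B) + |S| * (ℓ:ℝ) := by
            have : (r:ℝ) ≤ (ℓ:ℝ) := by exact_mod_cast hrℓ.le
            have h2 := mul_le_mul_of_nonneg_left hRbound (le_of_lt hℓR)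
            nlinarith [abs_nonneg S]
        _ = (ℓ:ℝ) * ((ℓ:ℝ)*B + |S|) := by ring
    calc |(ℓ:ℝ)*R - S*(r:ℝ)| / (T*(ℓ:ℝ)) ≤ ((ℓ:ℝ) * ((ℓ:ℝ)*B + |S|)) / (T*(ℓ:ℝ)) := by
          gcongr
      _ = ((ℓ:ℝ)*B + |S|) / T := by
          rw [mul_comm T (ℓ:ℝ), mul_div_mul_left _ _ hℓR.ne']
  have hTtop : Tendsto (fun N : ℕ => 2*(N:ℝ)+1) atTop atTop := by
    apply Filter.tendsto_atTop_add_const_right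
    exact Tendsto.const_mul_atTop two_pos tendsto_natCast_atTop_atTop
  have h0 : Tendsto (fun N : ℕ => ((ℓ:ℝ)*B + |S|)/(2*(N:ℝ)+1)) atTop (nhds 0) :=
    Tendsto.div_atTop tendsto_const_nhds hTtop
  have hsq : Tendsto (fun N : ℕ =>
      (∑ i ∈ Finset.Icc (-(N:ℤ)) (N:ℤ), w (c i)) / (2*(N:ℝ)+1) - S/(ℓ:ℝ)) atTop (nhds 0) :=
    squeeze_zero_norm (fun N => by rw [Real.norm_eq_abs]; exact key N) h0
  exact tendsto_sub_nhds_zero_iff.mp hsq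

lemma cycleAvgSet_finite {V : Type*} [Fintype V] (adj : V → V → Prop) (w : V → ℝ)
 :
    (cycleAvgSet adj w).Finite := by
  classical
  have hsub : cycleAvgSet adj w ⊆
      ⋃ ℓ ∈ Finset.Icc 1 (Fintype.card V),
        Set.range (fun f : Fin ℓ → V => (∑ i : Fin ℓ, w (f i))/(ℓ:ℝ)) := by
    rintro x ⟨ℓ, c, hℓ, -, -, hinj, hx⟩
    have hℓcard : ℓ ≤ Fintype.card V := by
      have h1 : (Finset.Ico (0:ℤ) (ℓ:ℤ)).card ≤ (Finset.univ : Finset V).card :=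
        Finset.card_le_card_of_injOn c (fun a _ => Finset.mem_univ _)
          (by rwa [Finset.coe_Ico])
      rw [Int.card_Ico, Finset.card_univ] at h1
      omega
    have hmem : ℓ ∈ Finset.Icc 1 (Fintype.card V) := Finset.mem_Icc.mpr ⟨hℓ, hℓcard⟩
    refine Set.mem_biUnion hmem ⟨fun i => c (i:ℤ), ?_⟩
    show (∑ i : Fin ℓ, w (c ((i:ℕ):ℤ))) / (ℓ:ℝ) = x
    rw [hx]
    congr 1
    have himg : Finset.Ico (0:ℤ) (ℓ:ℤ) = (Finset.range ℓ).image (fun i : ℕ => (i:ℤ)) := by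
      ext k
      simp only [Finset.mem_Ico, Finset.mem_image, Finset.mem_range]
      constructor
      · intro hk; exact ⟨k.toNat, by omega, by omega⟩
      · rintro ⟨i, hi, rfl⟩; omega
    rw [himg, Finset.sum_image (fun a _ b _ h => by exact_mod_cast h)]
    exact Fin.sum_univ_eq_sum_range (fun i : ℕ => w (c (i:ℤ))) ℓ
  refine Set.Finite.subset (Set.Finite.biUnion (Finset.finite_toSet _)
    fun ℓ _ => Set.finite_range _) hsub

/-- The set of upper average weights of doubly infinite walks. -/
noncomputable def walkUpperSet {V : Type*} (adj : V → V → Prop) (w : V → ℝ) : Set ℝ :=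
  {x : ℝ | ∃ v : ℤ → V, (∀ i : ℤ, adj (v i) (v (i + 1))) ∧
    x = Filter.limsup
      (fun N : ℕ => (∑ i ∈ Finset.Icc (-(N : ℤ)) (N : ℤ), w (v i)) / (2 * (N : ℝ) + 1))
      Filter.atTop}

/-- The set of lower average weights of doubly infinite walks. -/
noncomputable def walkLowerSet {V : Type*} (adj : V → V → Prop) (w : V → ℝ) : Set ℝ :=
  {x : ℝ | ∃ v : ℤ → V, (∀ i : ℤ, adj (v i) (v (i + 1))) ∧
    x = Filter.liminf
      (fun N : ℕ => (∑ i ∈ Finset.Icc (-(N : ℤ)) (N : ℤ), w (v i)) / (2 * (N : ℝ) + 1))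
      Filter.atTop}

/-- In a finite vertex-weighted digraph admitting a doubly infinite walk, the supremum of
upper average weights of doubly infinite walks equals the maximum average weight of a
simple cycle, and the infimum of lower average weights equals the minimum average weight
of a simple cycle. -/
theorem sup_walk_avg_eq_max_cycle_avg {V : Type*} [Fintype V]
    (adj : V → V → Prop) (w : V → ℝ)
    (hwalk : ∃ v : ℤ → V, ∀ i : ℤ, adj (v i) (v (i + 1))) :
    ∃ M m : ℝ,
      IsGreatest (cycleAvgSet adj w) M ∧
      IsLeast (cycleAvgSet adj w) m ∧
      sSup (walkUpperSet adj w) = M ∧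
      sInf (walkLowerSet adj w) = m := by
  classical
  obtain ⟨v₀, hv₀⟩ := hwalk
  haveI : Nonempty V := ⟨v₀ 0⟩
  have hne : (cycleAvgSet adj w).Nonempty := by
    obtain ⟨i₀, j₀, h1, h2, h3, h4⟩ := exists_rep v₀ 0
    obtain ⟨i, ℓ, hℓpos, -, -, -, hvi, hinj⟩ :=
      find_cycle v₀ 0 (0 + (Fintype.card V : ℤ)) i₀ j₀ h1 h2 h3 h4
    exact ⟨_, cycle_mem adj w v₀ hv₀ i ℓ hℓpos hvi hinj⟩
  have hfin := cycleAvgSet_finite adj w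
  set M := sSup (cycleAvgSet adj w) with hMdef
  set m := sInf (cycleAvgSet adj w) with hmdef
  have hMg : IsGreatest (cycleAvgSet adj w) M :=
    ⟨hne.csSup_mem hfin, fun x hx => le_csSup hfin.bddAbove hx⟩
  have hmL : IsLeast (cycleAvgSet adj w) m :=
    ⟨hne.csInf_mem hfin, fun x hx => csInf_le hfin.bddBelow hx⟩
  obtain ⟨K, hK0, hK1, hK2⟩ : ∃ K : ℝ, 0 ≤ K ∧ (∀ x, w x - M ≤ K) ∧ (∀ x, m - w x ≤ K) := by
    refine ⟨0 ⊔ Finset.univ.sup' Finset.univ_nonempty (fun x => (w x - M) ⊔ (m - w x)),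
      le_max_left _ _, fun x => ?_, fun x => ?_⟩
    · exact le_trans (le_trans (le_max_left _ _)
        (Finset.le_sup' (fun x => (w x - M) ⊔ (m - w x)) (Finset.mem_univ x)))
        (le_max_right _ _)
    · exact le_trans (le_trans (le_max_right (w x - M) _)
        (Finset.le_sup' (fun x => (w x - M) ⊔ (m - w x)) (Finset.mem_univ x)))
        (le_max_right _ _)
  obtain ⟨B, hB⟩ : ∃ B : ℝ, ∀ x, |w x| ≤ B :=
    ⟨Finset.univ.sup' Finset.univ_nonempty (fun x => |w x|),
      fun x => Finset.le_sup' (fun x => |w x|) (Finset.mem_univ x)⟩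
  set D := (Fintype.card V : ℝ) * K with hDdef
  have hD0 : 0 ≤ D := mul_nonneg (Nat.cast_nonneg _) hK0
  have hTpos : ∀ N : ℕ, (0:ℝ) < 2*(N:ℝ)+1 := fun N => by positivity
  have hTtop : Tendsto (fun N : ℕ => 2*(N:ℝ)+1) atTop atTop := by
    apply Filter.tendsto_atTop_add_const_right
    exact Tendsto.const_mul_atTop two_pos tendsto_natCast_atTop_atTop
  have hD0' : Tendsto (fun N : ℕ => D/(2*(N:ℝ)+1)) atTop (nhds 0) :=
    Tendsto.div_atTop tendsto_const_nhds hTtop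
  have hDD : ∀ N : ℕ, D/(2*(N:ℝ)+1) ≤ D := by
    intro N
    rw [div_le_iff₀ (hTpos N)]
    nlinarith [hD0, Nat.cast_nonneg (α := ℝ) N]
  have hMneg : ∀ x ∈ cycleAvgSet adj (-w), x ≤ -m := by
    intro x hx
    have h := neg_mem_cycleAvgSet hx
    rw [neg_neg] at h
    have := hmL.2 h
    linarith
  have segU := segment_sum_le adj w M K (fun x hx => hMg.2 hx) hK1 hK0
  have segL := segment_sum_le adj (-w) (-m) K hMneg (fun x => by have := hK2 x; simp only [Pi.neg_apply]; linarith) hK0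
  have avgUB : ∀ (v : ℤ → V), (∀ i, adj (v i) (v (i+1))) → ∀ N : ℕ,
      (∑ i ∈ Finset.Icc (-(N:ℤ)) (N:ℤ), w (v i)) / (2*(N:ℝ)+1) ≤ M + D/(2*(N:ℝ)+1) := by
    intro v hv N
    have h := segU (2*N+1) v hv (-(N:ℤ))
    rw [show (-(N:ℤ) + ((2*N+1 : ℕ):ℤ)) = (N:ℤ)+1 by push_cast; ring,
      Finset.sum_sub_distrib, Finset.sum_const, Int.card_Ico,
      show ((N:ℤ)+1 - (-(N:ℤ))).toNat = 2*N+1 by omega, nsmul_eq_mul] at h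
    push_cast at h
    rw [Icc_neg_eq_Ico N (fun i => w (v i)), div_le_iff₀ (hTpos N)]
    have hexp : (M + D/(2*(N:ℝ)+1)) * (2*(N:ℝ)+1) = M*(2*(N:ℝ)+1) + D := by
      field_simp
    rw [hexp]
    linarith
  have avgLB : ∀ (v : ℤ → V), (∀ i, adj (v i) (v (i+1))) → ∀ N : ℕ,
      m - D/(2*(N:ℝ)+1) ≤ (∑ i ∈ Finset.Icc (-(N:ℤ)) (N:ℤ), w (v i)) / (2*(N:ℝ)+1) := by
    intro v hv N
    have h := segL (2*N+1) v hv (-(N:ℤ))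
    simp only [Pi.neg_apply, sub_neg_eq_add] at h
    rw [show (-(N:ℤ) + ((2*N+1 : ℕ):ℤ)) = (N:ℤ)+1 by push_cast; ring] at h
    have hsplit : ∑ k ∈ Finset.Ico (-(N:ℤ)) ((N:ℤ)+1), (-w (v k) + m)
        = (2*(N:ℝ)+1) * m - ∑ k ∈ Finset.Ico (-(N:ℤ)) ((N:ℤ)+1), w (v k) := by
      rw [Finset.sum_add_distrib, Finset.sum_neg_distrib, Finset.sum_const, Int.card_Ico,
        show ((N:ℤ)+1 - (-(N:ℤ))).toNat = 2*N+1 by omega, nsmul_eq_mul]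
      push_cast
      ring
    rw [hsplit] at h
    rw [Icc_neg_eq_Ico N (fun i => w (v i)), le_div_iff₀ (hTpos N)]
    have hexp : (m - D/(2*(N:ℝ)+1)) * (2*(N:ℝ)+1) = m*(2*(N:ℝ)+1) - D := by
      field_simp
    rw [hexp]
    linarith
  have hMmem : M ∈ walkUpperSet adj w := by
    obtain ⟨ℓ, c, hℓ, hadj, hper, hinj, hMx⟩ := hMg.1
    exact ⟨c, hadj, by
      rw [hMx]
      exact ((periodic_avg_tendsto w c ℓ hℓ hper B hB).limsup_eq).symm⟩
  have hmmem : m ∈ walkLowerSet adj w := by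
    obtain ⟨ℓ, c, hℓ, hadj, hper, hinj, hmx⟩ := hmL.1
    exact ⟨c, hadj, by
      rw [hmx]
      exact ((periodic_avg_tendsto w c ℓ hℓ hper B hB).liminf_eq).symm⟩
  have hMub : ∀ x ∈ walkUpperSet adj w, x ≤ M := by
    rintro x ⟨v, hv, rfl⟩
    have hg : Tendsto (fun N : ℕ => M + D/(2*(N:ℝ)+1)) atTop (nhds M) := by
      simpa using tendsto_const_nhds.add hD0'
    have hbb : IsBoundedUnder (· ≥ ·) atTop
        (fun N : ℕ => (∑ i ∈ Finset.Icc (-(N:ℤ)) (N:ℤ), w (v i)) / (2*(N:ℝ)+1)) := by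
      refine isBoundedUnder_of ⟨m - D, fun N => ?_⟩
      have h1 := avgLB v hv N
      have h2 := hDD N
      linarith
    calc Filter.limsup
          (fun N : ℕ => (∑ i ∈ Finset.Icc (-(N:ℤ)) (N:ℤ), w (v i)) / (2*(N:ℝ)+1)) atTop
        ≤ Filter.limsup (fun N : ℕ => M + D/(2*(N:ℝ)+1)) atTop :=
          limsup_le_limsup (Eventually.of_forall (avgUB v hv))
            hbb.isCoboundedUnder_le hg.isBoundedUnder_le
      _ = M := hg.limsup_eq
  have hmlb : ∀ x ∈ walkLowerSet adj w, m ≤ x := by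
    rintro x ⟨v, hv, rfl⟩
    have hg : Tendsto (fun N : ℕ => m - D/(2*(N:ℝ)+1)) atTop (nhds m) := by
      simpa using tendsto_const_nhds.sub hD0'
    have hbb : IsBoundedUnder (· ≤ ·) atTop
        (fun N : ℕ => (∑ i ∈ Finset.Icc (-(N:ℤ)) (N:ℤ), w (v i)) / (2*(N:ℝ)+1)) := by
      refine isBoundedUnder_of ⟨M + D, fun N => ?_⟩
      have h1 := avgUB v hv N
      have h2 := hDD N
      linarith
    calc m = Filter.liminf (fun N : ℕ => m - D/(2*(N:ℝ)+1)) atTop := hg.liminf_eq.symm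
      _ ≤ Filter.liminf
          (fun N : ℕ => (∑ i ∈ Finset.Icc (-(N:ℤ)) (N:ℤ), w (v i)) / (2*(N:ℝ)+1)) atTop :=
          liminf_le_liminf (Eventually.of_forall (avgLB v hv))
            hg.isBoundedUnder_ge hbb.isCoboundedUnder_ge
  exact ⟨M, m, hMg, hmL, IsGreatest.csSup_eq ⟨hMmem, hMub⟩, IsLeast.csInf_eq ⟨hmmem, hmlb⟩⟩
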